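/- Let n ≥ 1, d ≥ 0, δ ≥ 0 be integers, F a field, and let f_δ(n,d) denote the number of monomials x₁^{i₁}⋯x_n^{i_n} with 0 ≤ i₁, …, i_n ≤ δ and i₁ + ⋯ + i_n ≤ d. Suppose P is a polynomial in n variables over F with every individual degree at most δ and total degree at most d, and A ⊆ F^n satisfies |A| > 2·f_δ(n, ⌊d/2⌋). If P(a − b) = 0 for all a, b ∈ A with a ≠ b, then P(0) = 0. -/

import Mathlib

/-- `f_δ(n,d)`: the number of monomials `x₁^{i₁} ⋯ x_n^{i_n}` with
`0 ≤ i₁, …, i_n ≤ δ` and `i₁ + ⋯ + i_n ≤ d`. -/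
noncomputable def monomialCount (δ n d : ℕ) : ℕ :=
  Nat.card {v : Fin n → ℕ // (∀ j, v j ≤ δ) ∧ ∑ j, v j ≤ d}

theorem bounded_degree_vanishing_lemma (n d δ : ℕ) (hn : 1 ≤ n)
    (F : Type*) [Field F] (P : MvPolynomial (Fin n) F)
    (hind : ∀ m ∈ P.support, ∀ i : Fin n, m i ≤ δ)
    (hdeg : P.totalDegree ≤ d)
    (A : Finset (Fin n → F))
    (hA : 2 * monomialCount δ n (d / 2) < A.card)
    (hvan : ∀ a ∈ A, ∀ b ∈ A, a ≠ b → MvPolynomial.eval (a - b) P = 0) :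
    MvPolynomial.eval (0 : Fin n → F) P = 0 := by
  classical
  by_contra h0
  set k := d / 2 with hk
  -- the box of exponent vectors with entries ≤ δ
  set B : Finset (Fin n → ℕ) := Fintype.piFinset (fun _ => Finset.range (δ + 1)) with hB
  have memB : ∀ v : Fin n → ℕ, v ∈ B ↔ ∀ j, v j ≤ δ := by
    intro v
    simp [hB, Fintype.mem_piFinset, Nat.lt_succ_iff]
  set D : Finset (Fin n → ℕ) := B.filter (fun u => ∑ j, u j ≤ k) with hD
  set D' : Finset (Fin n → ℕ) := B.filter (fun u => ¬ (∑ j, u j ≤ k)) with hD'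
  -- D.card = monomialCount δ n k
  have hDcard : D.card = monomialCount δ n k := by
    have hmem : ∀ v : Fin n → ℕ, v ∈ D ↔ (∀ j, v j ≤ δ) ∧ ∑ j, v j ≤ k := by
      intro v
      rw [hD, Finset.mem_filter, memB]
    rw [monomialCount, ← Nat.card_eq_finsetCard]
    exact Nat.card_congr (Equiv.subtypeEquivRight hmem)
  -- coefficient function
  set c : (Fin n → ℕ) → (Fin n → ℕ) → F := fun u v =>
    P.coeff (Finsupp.equivFunOnFinite.symm (u + v)) * ∏ j, ((u j + v j).choose (u j) : F)
    with hc
  -- sum of entries of support elements is ≤ d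
  have hsupd : ∀ m ∈ P.support, ∑ j, m j ≤ d := by
    intro m hm
    refine le_trans ?_ (le_trans (MvPolynomial.le_totalDegree hm) hdeg)
    rw [Finsupp.sum_fintype]
    intro; rfl
  -- key expansion
  have expand : ∀ a b : Fin n → F, MvPolynomial.eval (a - b) P =
      ∑ u ∈ B, ∑ v ∈ B, c u v * (∏ j, a j ^ u j) * (∏ j, (- b j) ^ v j) := by
    intro a b
    rw [MvPolynomial.eval_eq']
    have step1 : ∀ m ∈ P.support,
        P.coeff m * ∏ i, (a - b) i ^ m i =
        ∑ u ∈ B, P.coeff m * ∏ i,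
          (a i ^ u i * (- b i) ^ (m i - u i) * ((m i).choose (u i) : F)) := by
      intro m hm
      have : ∀ i, (a - b) i ^ m i =
          ∑ j ∈ Finset.range (m i + 1),
            a i ^ j * (- b i) ^ (m i - j) * ((m i).choose j : F) := by
        intro i
        rw [Pi.sub_apply, sub_eq_add_neg, add_pow]
      simp_rw [this]
      rw [Finset.prod_univ_sum, Finset.mul_sum]
      -- extend sum from piFinset(range (m i + 1)) to B
      refine Finset.sum_subset ?_ ?_
      · intro u hu
        rw [memB]
        intro j
        have := (Fintype.mem_piFinset.mp hu) j
        rw [Finset.mem_range, Nat.lt_succ_iff] at this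
        exact le_trans this (hind m hm j)
      · intro u _ hu
        rw [Fintype.mem_piFinset] at hu
        push_neg at hu
        obtain ⟨i, hi⟩ := hu
        rw [Finset.mem_range, Nat.lt_succ_iff, not_le] at hi
        have : ((m i).choose (u i) : F) = 0 := by
          rw [Nat.choose_eq_zero_of_lt hi, Nat.cast_zero]
        rw [Finset.prod_eq_zero (Finset.mem_univ i) (by rw [this, mul_zero]), mul_zero]
    rw [Finset.sum_congr rfl step1, Finset.sum_comm]
    refine Finset.sum_congr rfl ?_
    intro u huB
    have hL : ∀ m ∈ P.support,
        (MvPolynomial.coeff m P * ∏ i, (a i ^ u i * (- b i) ^ (m i - u i) * ((m i).choose (u i) : F))) ≠ 0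
        → ∀ i, u i ≤ m i := by
      intro m hm hne i
      by_contra hlt
      push_neg at hlt
      apply hne
      have : ((m i).choose (u i) : F) = 0 := by
        rw [Nat.choose_eq_zero_of_lt hlt, Nat.cast_zero]
      rw [Finset.prod_eq_zero (Finset.mem_univ i) (by rw [this, mul_zero]), mul_zero]
    have hR : ∀ v ∈ B,
        (c u v * (∏ j, a j ^ u j) * (∏ j, (- b j) ^ v j)) ≠ 0
        → Finsupp.equivFunOnFinite.symm (u + v) ∈ P.support := by
      intro v hv hne
      by_contra hns
      apply hne
      simp only [MvPolynomial.notMem_support_iff] at hns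
      simp only [hc]
      rw [hns, zero_mul, zero_mul, zero_mul]
    calc ∑ m ∈ P.support, MvPolynomial.coeff m P *
            ∏ i, (a i ^ u i * (- b i) ^ (m i - u i) * ((m i).choose (u i) : F))
        = ∑ m ∈ P.support.filter (fun m => ∀ i, u i ≤ m i), MvPolynomial.coeff m P *
            ∏ i, (a i ^ u i * (- b i) ^ (m i - u i) * ((m i).choose (u i) : F)) :=
          (Finset.sum_filter_of_ne hL).symm
      _ = ∑ v ∈ B.filter (fun v => Finsupp.equivFunOnFinite.symm (u + v) ∈ P.support),
            c u v * (∏ j, a j ^ u j) * (∏ j, (- b j) ^ v j) := by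
          refine Finset.sum_nbij' (fun m => fun i => m i - u i)
            (fun v => Finsupp.equivFunOnFinite.symm (u + v)) ?_ ?_ ?_ ?_ ?_
          · intro m hm
            rw [Finset.mem_filter] at hm ⊢
            obtain ⟨hms, hum⟩ := hm
            constructor
            · rw [memB]
              intro j
              exact le_trans (Nat.sub_le _ _) (hind m hms j)
            · show Finsupp.equivFunOnFinite.symm (u + fun i => m i - u i) ∈ P.support
              have h2 : (u + fun i => m i - u i) = ⇑m := by
                funext i
                simp only [Pi.add_apply]
                exact Nat.add_sub_cancel' (hum i)
              rw [h2, Finsupp.equivFunOnFinite_symm_coe]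
              exact hms
          · intro v hv
            rw [Finset.mem_filter] at hv ⊢
            refine ⟨hv.2, ?_⟩
            intro i
            show u i ≤ (Finsupp.equivFunOnFinite.symm (u + v)) i
            rw [Finsupp.coe_equivFunOnFinite_symm]
            exact Nat.le_add_right _ _
          · intro m hm
            rw [Finset.mem_filter] at hm
            show Finsupp.equivFunOnFinite.symm (u + fun i => m i - u i) = m
            have h2 : (u + fun i => m i - u i) = ⇑m := by
              funext i
              simp only [Pi.add_apply]
              exact Nat.add_sub_cancel' (hm.2 i)
            rw [h2, Finsupp.equivFunOnFinite_symm_coe]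
          · intro v hv
            funext i
            show (Finsupp.equivFunOnFinite.symm (u + v)) i - u i = v i
            rw [Finsupp.coe_equivFunOnFinite_symm]
            simp
          · intro m hm
            rw [Finset.mem_filter] at hm
            simp only [hc]
            have h2 : (u + fun i => m i - u i) = ⇑m := by
              funext i
              simp only [Pi.add_apply]
              exact Nat.add_sub_cancel' (hm.2 i)
            rw [h2, Finsupp.equivFunOnFinite_symm_coe]
            rw [mul_assoc, mul_assoc, ← Finset.prod_mul_distrib, ← Finset.prod_mul_distrib]
            congr 1
            apply Finset.prod_congr rfl
            intro i _
            have h3 : u i + (m i - u i) = m i := Nat.add_sub_cancel' (hm.2 i)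
            rw [h3]
            ring
      _ = ∑ v ∈ B, c u v * (∏ j, a j ^ u j) * (∏ j, (- b j) ^ v j) :=
          Finset.sum_filter_of_ne hR
  -- c u v vanishes when both exponent sums exceed k
  have hcz : ∀ u v : Fin n → ℕ, ¬ (∑ j, u j ≤ k) → ¬ (∑ j, v j ≤ k) → c u v = 0 := by
    intro u v hu hv
    have hns : Finsupp.equivFunOnFinite.symm (u + v) ∉ P.support := by
      intro hs
      have h1 := hsupd _ hs
      have h2 : ∑ j, (Finsupp.equivFunOnFinite.symm (u + v)) j = ∑ j, u j + ∑ j, v j := by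
        simp only [Finsupp.coe_equivFunOnFinite_symm, Pi.add_apply]
        rw [Finset.sum_add_distrib]
      rw [h2] at h1
      omega
    simp only [hc]
    rw [MvPolynomial.notMem_support_iff.mp hns, zero_mul]
  -- matrix setup
  set M : Matrix A A F := fun a b => MvPolynomial.eval ((a : Fin n → F) - (b : Fin n → F)) P with hM
  set X : Matrix A (↥D ⊕ ↥D) F := fun a i => Sum.elim
      (fun u : ↥D => ∏ j, (a : Fin n → F) j ^ (u : Fin n → ℕ) j)
      (fun v : ↥D => ∑ u ∈ D', c u v * ∏ j, (a : Fin n → F) j ^ u j) i with hX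
  set Y : Matrix (↥D ⊕ ↥D) A F := fun i b => Sum.elim
      (fun u : ↥D => ∑ v ∈ B, c u v * ∏ j, (- (b : Fin n → F) j) ^ v j)
      (fun v : ↥D => ∏ j, (- (b : Fin n → F) j) ^ (v : Fin n → ℕ) j) i with hY
  have hMXY : M = X * Y := by
    funext a b
    show MvPolynomial.eval ((a : Fin n → F) - (b : Fin n → F)) P = (X * Y) a b
    rw [expand, Matrix.mul_apply, Fintype.sum_sum_type]
    simp only [hX, hY, Sum.elim_inl, Sum.elim_inr]
    rw [Finset.sum_coe_sort D
      (fun u => (∏ j, (a : Fin n → F) j ^ u j) * ∑ v ∈ B, c u v * ∏ j, (- (b : Fin n → F) j) ^ v j)]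
    rw [Finset.sum_coe_sort D
      (fun v => (∑ u ∈ D', c u v * ∏ j, (a : Fin n → F) j ^ u j) * ∏ j, (- (b : Fin n → F) j) ^ v j)]
    rw [← Finset.sum_filter_add_sum_filter_not B (fun u => ∑ j, u j ≤ k), ← hD, ← hD']
    congr 1
    · apply Finset.sum_congr rfl
      intro u hu
      rw [Finset.mul_sum]
      apply Finset.sum_congr rfl
      intro v hv
      ring
    · rw [Finset.sum_comm]
      have hz : ∀ v ∈ B,
          (∑ u ∈ D', (c u v * ∏ j, (a : Fin n → F) j ^ u j) * ∏ j, (- (b : Fin n → F) j) ^ v j) ≠ 0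
          → ∑ j, v j ≤ k := by
        intro v hv hne
        by_contra hvk
        apply hne
        apply Finset.sum_eq_zero
        intro u hu
        rw [hD', Finset.mem_filter] at hu
        rw [hcz u v hu.2 hvk, zero_mul, zero_mul]
      rw [← Finset.sum_filter_of_ne hz, ← hD]
      apply Finset.sum_congr rfl
      intro v hv
      rw [Finset.sum_mul]
  -- M is a diagonal matrix with nonzero entries
  have hMdiag : M = Matrix.diagonal (fun _ : ↥A => MvPolynomial.eval (0 : Fin n → F) P) := by
    funext a b
    show MvPolynomial.eval ((a : Fin n → F) - (b : Fin n → F)) P = _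
    by_cases hab : a = b
    · subst hab
      rw [sub_self, Matrix.diagonal_apply_eq]
    · rw [Matrix.diagonal_apply_ne _ hab]
      exact hvan _ a.2 _ b.2 (fun h => hab (Subtype.ext h))
  have hrank1 : M.rank = A.card := by
    rw [hMdiag, Matrix.rank_diagonal]
    rw [← Fintype.card_coe A]
    exact Fintype.card_congr (Equiv.subtypeUnivEquiv (fun _ => h0))
  have hrank2 : M.rank ≤ 2 * monomialCount δ n k := by
    calc M.rank ≤ X.rank := by rw [hMXY]; exact Matrix.rank_mul_le_left X Y
      _ ≤ Fintype.card (↥D ⊕ ↥D) := Matrix.rank_le_card_width X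
      _ = 2 * D.card := by
          rw [Fintype.card_sum, Fintype.card_coe]
          ring
      _ = 2 * monomialCount δ n k := by rw [hDcard]
  rw [hrank1] at hrank2
  omega
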